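/- Let (X,μ) be a probability space, T: X → X an invertible ergodic measure-preserving transformation that is mixing, and F₀ a sub-σ-algebra with T⁻¹F₀ ⊆ F₀. Let φ = (φ¹,…,φ^k) ∈ L²(X,ℝ^k) with ∫_X φ dμ = 0, and suppose that for each component, Σ_{n≥1} ‖E[φ∘T^{-n} | F₀]‖_{L²} < ∞ and Σ_{n≥0} ‖E[φ∘T^n | F₀] − φ∘T^n‖_{L²} < ∞. Then for all 1 ≤ β, γ ≤ k the series Σ^{βγ} = Σ_{n=−∞}^{∞} ∫_X φ^β · (φ^γ∘T^n) dμ and E^{βγ} = Σ_{n=1}^{∞} ∫_X φ^β · (φ^γ∘T^n) dμ converge. -/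

import Mathlib

open MeasureTheory Filter
open scoped ENNReal Topology

section Aux

variable {X : Type*} [mX : MeasurableSpace X] {μ : Measure X}

private lemma my_l2_mul_integrable {f g : X → ℝ} (hf : MemLp f 2 μ) (hg : MemLp g 2 μ) :
    Integrable (fun x => f x * g x) μ := by
  have h := MeasureTheory.L2.integrable_inner (𝕜 := ℝ) (hf.toLp f) (hg.toLp g)
  refine h.congr ?_
  filter_upwards [hf.coeFn_toLp, hg.coeFn_toLp] with x hfx hgx
  simp [hfx, hgx, RCLike.inner_apply, conj_trivial, mul_comm]

private lemma my_cauchy_schwarz {f g : X → ℝ} (hf : MemLp f 2 μ) (hg : MemLp g 2 μ) :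
    |∫ x, f x * g x ∂μ| ≤ (eLpNorm f 2 μ).toReal * (eLpNorm g 2 μ).toReal := by
  have h1 : ∫ x, f x * g x ∂μ = (inner ℝ (hf.toLp f) (hg.toLp g) : ℝ) := by
    rw [MeasureTheory.L2.inner_def]
    refine integral_congr_ae ?_
    filter_upwards [hf.coeFn_toLp, hg.coeFn_toLp] with x hfx hgx
    simp [hfx, hgx, RCLike.inner_apply, conj_trivial, mul_comm]
  rw [h1]
  calc |(inner ℝ (hf.toLp f) (hg.toLp g) : ℝ)| ≤ ‖hf.toLp f‖ * ‖hg.toLp g‖ :=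
        abs_real_inner_le_norm _ _
    _ = (eLpNorm f 2 μ).toReal * (eLpNorm g 2 μ).toReal := by
        rw [Lp.norm_toLp, Lp.norm_toLp]

private lemma my_key {X : Type*} (F0 : MeasurableSpace X) [mX : MeasurableSpace X]
    {μ : Measure X} (hF0 : F0 ≤ mX) [IsFiniteMeasure μ]
    {f g : X → ℝ} (hf : MemLp f 2 μ) (hg : MemLp g 2 μ)
    (hcf : MemLp (μ[f|F0]) 2 μ) (hcg : MemLp (μ[g|F0]) 2 μ) :
    |∫ x, f x * g x ∂μ| ≤
      (eLpNorm (μ[f|F0]) 2 μ).toReal * (eLpNorm (μ[g|F0]) 2 μ).toReal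
      + (eLpNorm f 2 μ).toReal * (eLpNorm (μ[g|F0] - g) 2 μ).toReal := by
  have hd : MemLp (μ[g|F0] - g) 2 μ := hcg.sub hg
  have e1 : ∫ x, f x * g x ∂μ =
      ∫ x, f x * (μ[g|F0]) x ∂μ - ∫ x, f x * ((μ[g|F0] - g)) x ∂μ := by
    rw [← integral_sub (my_l2_mul_integrable hf hcg) (my_l2_mul_integrable hf hd)]
    refine integral_congr_ae (Eventually.of_forall fun x => ?_)
    simp [Pi.sub_apply]
    ring
  have e2 : ∫ x, f x * (μ[g|F0]) x ∂μ = ∫ x, (μ[f|F0]) x * (μ[g|F0]) x ∂μ := by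
    have hmul : μ[(μ[g|F0]) * f | F0] =ᵐ[μ] (μ[g|F0]) * μ[f|F0] :=
      condExp_mul_of_stronglyMeasurable_left stronglyMeasurable_condExp
        (my_l2_mul_integrable hcg hf) (hf.integrable one_le_two)
    calc ∫ x, f x * (μ[g|F0]) x ∂μ = ∫ x, ((μ[g|F0]) * f) x ∂μ := by
          refine integral_congr_ae (Eventually.of_forall fun x => ?_)
          simp [mul_comm]
      _ = ∫ x, (μ[(μ[g|F0]) * f|F0]) x ∂μ := (integral_condExp hF0).symm
      _ = ∫ x, ((μ[g|F0]) * μ[f|F0]) x ∂μ := integral_congr_ae hmul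
      _ = ∫ x, (μ[f|F0]) x * (μ[g|F0]) x ∂μ := by
          refine integral_congr_ae (Eventually.of_forall fun x => ?_)
          simp [mul_comm]
  rw [e1, e2]
  calc |∫ x, (μ[f|F0]) x * (μ[g|F0]) x ∂μ - ∫ x, f x * ((μ[g|F0] - g)) x ∂μ|
      ≤ |∫ x, (μ[f|F0]) x * (μ[g|F0]) x ∂μ| + |∫ x, f x * ((μ[g|F0] - g)) x ∂μ| :=
        abs_sub _ _
    _ ≤ _ := add_le_add (my_cauchy_schwarz hcf hcg) (my_cauchy_schwarz hf hd)

private lemma my_me_iter (T : X ≃ᵐ X) (m : ℕ) : MeasurableEmbedding ((⇑T)^[m]) := by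
  induction m with
  | zero => simpa using MeasurableEmbedding.id
  | succ n ih =>
    rw [Function.iterate_succ]
    exact ih.comp T.measurableEmbedding

private lemma my_summable_div_two {a : ℕ → ℝ} (ha : Summable a) (hpos : ∀ n, 0 ≤ a n) :
    Summable fun n => a (n / 2) := by
  have hf : Summable (fun p : ℕ × Fin 2 => a p.1) := by
    rw [summable_prod_of_nonneg (fun p => hpos p.1)]
    refine ⟨fun x => ?_, ?_⟩
    · exact Summable.of_finite
    · have he : (fun x : ℕ => ∑' _ : Fin 2, a x) = fun x => 2 * a x := by
        funext x
        rw [tsum_fintype]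
        simp [Finset.sum_const]
        try ring
      rw [he]
      exact ha.mul_left 2
  have h2 := (Nat.divModEquiv 2).summable_iff.2 hf
  exact h2

private lemma my_aux_pos {X : Type*} (F0 : MeasurableSpace X) [mX : MeasurableSpace X]
    {μ : Measure X} [IsProbabilityMeasure μ]
    (T : X ≃ᵐ X) (hT : MeasurePreserving (⇑T) μ μ) (hF0 : F0 ≤ mX)
    {f g : X → ℝ} (hf : MemLp f 2 μ) (hg : MemLp g 2 μ)
    (h1 : ∑' n : ℕ, eLpNorm (μ[f ∘ (⇑T.symm)^[n + 1] | F0]) 2 μ < ∞)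
    (h2 : ∑' n : ℕ, eLpNorm (μ[g ∘ (⇑T)^[n] | F0] - g ∘ (⇑T)^[n]) 2 μ < ∞) :
    Summable (fun n : ℕ => ∫ x, f x * g ((⇑T)^[n + 1] x) ∂μ) := by
  set a : ℕ → ℝ := fun n => (eLpNorm (μ[f ∘ (⇑T.symm)^[n + 1] | F0]) 2 μ).toReal with ha_def
  set b : ℕ → ℝ := fun n =>
    (eLpNorm (μ[g ∘ (⇑T)^[n] | F0] - g ∘ (⇑T)^[n]) 2 μ).toReal with hb_def
  have h1fin : ∀ n, eLpNorm (μ[f ∘ (⇑T.symm)^[n + 1] | F0]) 2 μ ≠ ∞ := fun n =>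
    ne_top_of_le_ne_top h1.ne (ENNReal.le_tsum n)
  have h2fin : ∀ n, eLpNorm (μ[g ∘ (⇑T)^[n] | F0] - g ∘ (⇑T)^[n]) 2 μ ≠ ∞ := fun n =>
    ne_top_of_le_ne_top h2.ne (ENNReal.le_tsum n)
  have ha : Summable a := ENNReal.summable_toReal h1.ne
  have hb : Summable b := ENNReal.summable_toReal h2.ne
  set Cf := (eLpNorm f 2 μ).toReal with hCf
  set Cg := (eLpNorm g 2 μ).toReal with hCg
  set A := ∑' n, a n with hA
  have haA : ∀ n, a n ≤ A := fun n => Summable.le_tsum ha n (fun m _ => ENNReal.toReal_nonneg)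
  have hbound : ∀ n : ℕ, |∫ x, f x * g ((⇑T)^[n + 1] x) ∂μ| ≤
      (A + Cf) * b ((n + 1) / 2) + Cg * a (n / 2) := by
    intro n
    set m := n / 2 + 1 with hm
    set l := (n + 1) / 2 with hl
    have hml : l + m = n + 1 := by omega
    have hS : MeasurePreserving ((⇑T.symm)^[m]) μ μ := (hT.symm T).iterate m
    have hSl : MeasurePreserving ((⇑T)^[l]) μ μ := hT.iterate l
    have hchg : ∫ x, f x * g ((⇑T)^[n + 1] x) ∂μ =
        ∫ x, (f ∘ (⇑T.symm)^[m]) x * (g ∘ (⇑T)^[l]) x ∂μ := by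
      rw [← hS.integral_comp (my_me_iter T.symm m) (fun x => f x * g ((⇑T)^[n + 1] x))]
      refine integral_congr_ae (Eventually.of_forall fun x => ?_)
      simp only [Function.comp_apply]
      congr 2
      rw [← hml, Function.iterate_add_apply]
      congr 1
      exact (Function.LeftInverse.iterate T.apply_symm_apply m) x
    have hf' : MemLp (f ∘ (⇑T.symm)^[m]) 2 μ := hf.comp_measurePreserving hS
    have hg' : MemLp (g ∘ (⇑T)^[l]) 2 μ := hg.comp_measurePreserving hSl
    have hcf' : MemLp (μ[f ∘ (⇑T.symm)^[m] | F0]) 2 μ :=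
      ⟨(stronglyMeasurable_condExp.mono hF0).aestronglyMeasurable,
        (h1fin (n / 2)).lt_top⟩
    have hdm : AEStronglyMeasurable (μ[g ∘ (⇑T)^[l] | F0] - g ∘ (⇑T)^[l]) μ :=
      (stronglyMeasurable_condExp.mono hF0).aestronglyMeasurable.sub hg'.1
    have htri : eLpNorm (μ[g ∘ (⇑T)^[l] | F0]) 2 μ ≤
        eLpNorm (μ[g ∘ (⇑T)^[l] | F0] - g ∘ (⇑T)^[l]) 2 μ + eLpNorm (g ∘ (⇑T)^[l]) 2 μ := by
      have hrw : μ[g ∘ (⇑T)^[l] | F0] =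
          (μ[g ∘ (⇑T)^[l] | F0] - g ∘ (⇑T)^[l]) + g ∘ (⇑T)^[l] := by
        ext x; simp
      nth_rewrite 1 [hrw]
      exact eLpNorm_add_le hdm hg'.1 one_le_two
    have hcg' : MemLp (μ[g ∘ (⇑T)^[l] | F0]) 2 μ := by
      refine ⟨(stronglyMeasurable_condExp.mono hF0).aestronglyMeasurable, ?_⟩
      exact lt_of_le_of_lt htri (ENNReal.add_lt_top.2 ⟨(h2fin l).lt_top, hg'.2⟩)
    have hk := my_key F0 hF0 hf' hg' hcf' hcg'
    rw [hchg]
    refine hk.trans ?_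
    have e_f : (eLpNorm (f ∘ (⇑T.symm)^[m]) 2 μ).toReal = Cf := by
      rw [eLpNorm_comp_measurePreserving hf.1 hS]
    have e_gl : eLpNorm (g ∘ (⇑T)^[l]) 2 μ = eLpNorm g 2 μ :=
      eLpNorm_comp_measurePreserving hg.1 hSl
    have e_cg : (eLpNorm (μ[g ∘ (⇑T)^[l] | F0]) 2 μ).toReal ≤ b l + Cg := by
      have hne : eLpNorm (μ[g ∘ (⇑T)^[l] | F0] - g ∘ (⇑T)^[l]) 2 μ +
          eLpNorm (g ∘ (⇑T)^[l]) 2 μ ≠ ∞ := by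
        rw [e_gl]
        exact ENNReal.add_ne_top.2 ⟨h2fin l, hg.2.ne⟩
      calc (eLpNorm (μ[g ∘ (⇑T)^[l] | F0]) 2 μ).toReal
          ≤ (eLpNorm (μ[g ∘ (⇑T)^[l] | F0] - g ∘ (⇑T)^[l]) 2 μ +
              eLpNorm (g ∘ (⇑T)^[l]) 2 μ).toReal := ENNReal.toReal_mono hne htri
        _ = b l + Cg := by
            rw [ENNReal.toReal_add (h2fin l) (by rw [e_gl]; exact hg.2.ne), e_gl]
    have e_a : (eLpNorm (μ[f ∘ (⇑T.symm)^[m] | F0]) 2 μ).toReal = a (n / 2) := rfl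
    have e_b : (eLpNorm (μ[g ∘ (⇑T)^[l] | F0] - g ∘ (⇑T)^[l]) 2 μ).toReal = b l := rfl
    rw [e_a, e_b, e_f]
    have han : 0 ≤ a (n / 2) := ENNReal.toReal_nonneg
    have hbn : 0 ≤ b l := ENNReal.toReal_nonneg
    have hCfn : 0 ≤ Cf := ENNReal.toReal_nonneg
    have hCgn : 0 ≤ Cg := ENNReal.toReal_nonneg
    have step1 : a (n / 2) * (eLpNorm (μ[g ∘ (⇑T)^[l] | F0]) 2 μ).toReal ≤
        a (n / 2) * (b l + Cg) := mul_le_mul_of_nonneg_left e_cg han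
    have step2 : a (n / 2) * b l ≤ A * b l := mul_le_mul_of_nonneg_right (haA _) hbn
    have hlid : l = (n + 1) / 2 := hl
    nlinarith [step1, step2]
  have hbsum : Summable (fun n : ℕ => (A + Cf) * b ((n + 1) / 2) + Cg * a (n / 2)) := by
    apply Summable.add
    · have hb2 : Summable fun n : ℕ => b (n / 2) :=
        my_summable_div_two hb (fun n => ENNReal.toReal_nonneg)
      have := (summable_nat_add_iff (f := fun n : ℕ => b (n / 2)) 1).2 hb2
      exact this.mul_left _
    · exact (my_summable_div_two ha (fun n => ENNReal.toReal_nonneg)).mul_left _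
  exact Summable.of_abs
    (Summable.of_nonneg_of_le (fun n => abs_nonneg _) hbound hbsum)

end Aux

/-- The `n`-th iterate of an invertible map `T`, for `n : ℤ` (negative powers use `T⁻¹`). -/
def zIter {X : Type*} [MeasurableSpace X] (T : X ≃ᵐ X) : ℤ → X → X
  | Int.ofNat n => (⇑T)^[n]
  | Int.negSucc n => (⇑T.symm)^[n + 1]

/-- Proposition 2.5(i): for a mixing `T` and an `ℝ^k`-valued mean-zero
`φ ∈ L²` satisfying the summability conditions (2.2) componentwise, the series
`Σ^{βγ} = Σ_{n∈ℤ} ∫ φ^β (φ^γ∘T^n) dμ` and `E^{βγ} = Σ_{n≥1} ∫ φ^β (φ^γ∘T^n) dμ` converge. -/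
theorem covariance_series_converge
    {X : Type*} (F0 : MeasurableSpace X) [mX : MeasurableSpace X]
    (μ : Measure X) [IsProbabilityMeasure μ]
    (T : X ≃ᵐ X) (hT : MeasurePreserving (⇑T) μ μ) (hTerg : Ergodic (⇑T) μ)
    (hmix : ∀ A B : Set X, MeasurableSet A → MeasurableSet B →
      Tendsto (fun n : ℕ => (μ (A ∩ (⇑T)^[n] ⁻¹' B)).toReal) atTop
        (𝓝 ((μ A).toReal * (μ B).toReal)))
    (hF0 : F0 ≤ mX)
    (hF0T : MeasurableSpace.comap (⇑T) F0 ≤ F0)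
    (k : ℕ) (φ : Fin k → X → ℝ)
    (hφ : ∀ β, MemLp (φ β) 2 μ) (hmean : ∀ β, ∫ x, φ β x ∂μ = 0)
    (h1 : ∀ β, ∑' n : ℕ, eLpNorm (μ[(φ β) ∘ (⇑T.symm)^[n + 1] | F0]) 2 μ < ∞)
    (h2 : ∀ β, ∑' n : ℕ, eLpNorm (μ[(φ β) ∘ (⇑T)^[n] | F0] - (φ β) ∘ (⇑T)^[n]) 2 μ < ∞) :
    ∀ β γ : Fin k,
      Summable (fun n : ℤ => ∫ x, φ β x * φ γ (zIter T n x) ∂μ) ∧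
      Summable (fun n : ℕ => ∫ x, φ β x * φ γ ((⇑T)^[n + 1] x) ∂μ) := by
  have hpos : ∀ β γ : Fin k,
      Summable (fun n : ℕ => ∫ x, φ β x * φ γ ((⇑T)^[n + 1] x) ∂μ) := fun β γ =>
    my_aux_pos F0 T hT hF0 (hφ β) (hφ γ) (h1 β) (h2 γ)
  intro β γ
  refine ⟨?_, hpos β γ⟩
  apply Summable.of_nat_of_neg_add_one
  · have h0 : Summable (fun n : ℕ => ∫ x, φ β x * φ γ ((⇑T)^[n] x) ∂μ) := by
      rw [← summable_nat_add_iff 1]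
      exact hpos β γ
    refine h0.congr fun n => ?_
    rfl
  · refine (hpos γ β).congr fun n => ?_
    have hz : zIter T (-(↑n + 1)) = (⇑T.symm)^[n + 1] := by
      have : (-(↑n + 1) : ℤ) = Int.negSucc n := by
        rw [Int.negSucc_eq]
      rw [this]
      rfl
    rw [hz]
    have hS : MeasurePreserving ((⇑T)^[n + 1]) μ μ := hT.iterate (n + 1)
    have e := hS.integral_comp (my_me_iter T (n + 1))
      (fun x => φ β x * φ γ ((⇑T.symm)^[n + 1] x))
    rw [← e]
    refine integral_congr_ae (Eventually.of_forall fun x => ?_)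
    have hx : (⇑T.symm)^[n + 1] ((⇑T)^[n + 1] x) = x :=
      (Function.LeftInverse.iterate T.symm_apply_apply (n + 1)) x
    simp only [hx]
    ring
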